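/- Let Σ = (X, 𝒟, φ) be a system and let A ⊆ X be a bounded nonempty invariant set. If A is uniformly globally attractive and uniformly globally stable, then A is uniformly globally asymptotically stable. -/

import Mathlib

open scoped NNReal ENNReal
open Filter Topology Bornology

noncomputable section

/-- Functions of class 𝒦: continuous, strictly increasing, vanishing at zero. -/
def ClassK (γ : ℝ≥0 → ℝ≥0) : Prop :=
  Continuous γ ∧ StrictMono γ ∧ γ 0 = 0

/-- Functions of class 𝒦∞: class 𝒦 and unbounded. -/
def ClassKinf (γ : ℝ≥0 → ℝ≥0) : Prop :=
  ClassK γ ∧ ∀ M : ℝ≥0, ∃ r : ℝ≥0, M < γ r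

/-- Functions of class 𝒦ℒ. -/
def ClassKL (β : ℝ≥0 → ℝ≥0 → ℝ≥0) : Prop :=
  Continuous (fun p : ℝ≥0 × ℝ≥0 => β p.1 p.2) ∧
  (∀ t : ℝ≥0, ClassK fun r => β r t) ∧
  ∀ r : ℝ≥0, 0 < r →
    StrictAnti (fun t => β r t) ∧ Tendsto (fun t => β r t) atTop (𝓝 0)

/-- Distance of a point to a set, `‖x‖_A`. -/
def dA {X : Type*} [NormedAddCommGroup X] (A : Set X) (x : X) : ℝ≥0 :=
  (Metric.infDist x A).toNNReal

/-- The open ε-neighborhood `B_ε(A)` of a set. -/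
def ballSet {X : Type*} [NormedAddCommGroup X] (ε : ℝ≥0) (A : Set X) : Set X :=
  {x | dA A x < ε}

/-- A (time-invariant) control system with disturbances. -/
structure System (X : Type*) [NormedAddCommGroup X] [NormedSpace ℝ X]
    (W : Type*) [NormedAddCommGroup W] [NormedSpace ℝ W] where
  /-- the set of disturbance values -/
  D : Set W
  D_nonempty : D.Nonempty
  /-- the space of disturbances -/
  Dist : Set (ℝ≥0 → W)
  dist_mem : ∀ d ∈ Dist, ∀ t : ℝ≥0, d t ∈ D
  /-- axiom of shift invariance -/
  shift_invariant : ∀ d ∈ Dist, ∀ τ : ℝ≥0, (fun t => d (t + τ)) ∈ Dist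
  /-- axiom of concatenation -/
  concat_mem : ∀ d₁ ∈ Dist, ∀ d₂ ∈ Dist, ∀ t : ℝ≥0, 0 < t →
      (fun s => if s ≤ t then d₁ s else d₂ (s - t)) ∈ Dist
  /-- the transition map -/
  φ : ℝ≥0 → X → (ℝ≥0 → W) → X
  identity : ∀ (x : X), ∀ d ∈ Dist, φ 0 x d = x
  causality : ∀ (t : ℝ≥0) (x : X), ∀ d ∈ Dist, ∀ d' ∈ Dist,
      (∀ s ≤ t, d s = d' s) → φ t x d = φ t x d'
  cont : ∀ (x : X), ∀ d ∈ Dist, Continuous fun t : ℝ≥0 => φ t x d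
  cocycle : ∀ (t h : ℝ≥0) (x : X), ∀ d ∈ Dist,
      φ h (φ t x d) (fun s => d (t + s)) = φ (t + h) x d

namespace System

variable {X : Type*} [NormedAddCommGroup X] [NormedSpace ℝ X]
variable {W : Type*} [NormedAddCommGroup W] [NormedSpace ℝ W]
variable (S : System X W)

/-- Reachability set within time `T`. -/
def RT (T : ℝ≥0) (B : Set X) : Set X :=
  {y | ∃ t ≤ T, ∃ d ∈ S.Dist, ∃ x ∈ B, y = S.φ t x d}

/-- Reachability set. -/
def R (B : Set X) : Set X :=
  {y | ∃ t : ℝ≥0, ∃ d ∈ S.Dist, ∃ x ∈ B, y = S.φ t x d}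

/-- Robust forward completeness. -/
def RFC : Prop :=
  ∀ C : ℝ≥0, 0 < C → ∀ τ : ℝ≥0, 0 < τ →
    IsBounded (S.RT τ {x : X | ‖x‖₊ ≤ C})

/-- Invariance of a set. -/
def Invariant (A : Set X) : Prop := S.R A ⊆ A

/-- Robust invariance of a set. -/
def RobustlyInvariant (A : Set X) : Prop :=
  S.Invariant A ∧
  ∀ ε : ℝ≥0, 0 < ε → ∀ h : ℝ≥0, 0 < h → ∃ δ : ℝ≥0, 0 < δ ∧
    ∀ t : ℝ≥0, t ≤ h → ∀ x : X, dA A x ≤ δ → ∀ d ∈ S.Dist, dA A (S.φ t x d) ≤ ε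

/-- Lagrange stability of a set. -/
def LagrangeStable (A : Set X) : Prop :=
  ∃ σ : ℝ≥0 → ℝ≥0, ClassKinf σ ∧ ∃ c : ℝ≥0, 0 < c ∧
    ∀ (x : X), ∀ d ∈ S.Dist, ∀ t : ℝ≥0, dA A (S.φ t x d) ≤ σ (dA A x) + c

/-- Uniform (local) stability of a set. -/
def ULS (A : Set X) : Prop :=
  ∀ ε : ℝ≥0, 0 < ε → ∃ δ : ℝ≥0, 0 < δ ∧
    ∀ x : X, dA A x ≤ δ → ∀ d ∈ S.Dist, ∀ t : ℝ≥0, dA A (S.φ t x d) ≤ ε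

/-- Uniform global stability of a set. -/
def UGS (A : Set X) : Prop :=
  ∃ σ : ℝ≥0 → ℝ≥0, ClassKinf σ ∧
    ∀ (x : X), ∀ d ∈ S.Dist, ∀ t : ℝ≥0, dA A (S.φ t x d) ≤ σ (dA A x)

/-- Uniform global asymptotic stability of a set. -/
def UGAS (A : Set X) : Prop :=
  ∃ β : ℝ≥0 → ℝ≥0 → ℝ≥0, ClassKL β ∧
    ∀ (x : X), ∀ d ∈ S.Dist, ∀ t : ℝ≥0, dA A (S.φ t x d) ≤ β (dA A x) t

/-- Practical uniform global asymptotic stability of a set. -/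
def PUGASSet (A : Set X) : Prop :=
  ∃ β : ℝ≥0 → ℝ≥0 → ℝ≥0, ClassKL β ∧ ∃ c : ℝ≥0, 0 < c ∧
    ∀ (x : X), ∀ d ∈ S.Dist, ∀ t : ℝ≥0, dA A (S.φ t x d) ≤ β (dA A x) t + c

/-- Global weak attractivity of a set. -/
def GWA (A : Set X) : Prop :=
  ∀ (x : X), ∀ d ∈ S.Dist, ∀ ε : ℝ≥0, 0 < ε → ∃ t : ℝ≥0, dA A (S.φ t x d) ≤ ε

/-- Uniform global weak attractivity of a set. -/
def UGWA (A : Set X) : Prop :=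
  ∀ ε : ℝ≥0, 0 < ε → ∀ r : ℝ≥0, 0 < r → ∃ τ : ℝ≥0,
    ∀ x : X, dA A x ≤ r → ∀ d ∈ S.Dist, ∃ t ≤ τ, dA A (S.φ t x d) ≤ ε

/-- Uniform global attractivity of a set. -/
def UGATT (A : Set X) : Prop :=
  ∀ ε : ℝ≥0, 0 < ε → ∀ r : ℝ≥0, 0 < r → ∃ τ : ℝ≥0,
    ∀ x : X, dA A x ≤ r → ∀ d ∈ S.Dist, ∀ t : ℝ≥0, τ ≤ t → dA A (S.φ t x d) ≤ ε

/-- Uniform ultimate boundedness of the system. -/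
def UUB : Prop :=
  ∃ K : ℝ≥0, 0 < K ∧ ∀ r : ℝ≥0, 0 < r → ∃ T : ℝ≥0,
    ∀ x : X, ‖x‖₊ ≤ r → ∀ d ∈ S.Dist, ∀ t : ℝ≥0, T ≤ t → ‖S.φ t x d‖₊ ≤ K

/-- Global recurrence of a set. -/
def GloballyRecurrent (A : Set X) : Prop :=
  ∀ (x : X), ∀ d ∈ S.Dist, ∃ t : ℝ≥0, S.φ t x d ∈ A

/-- Uniform global recurrence of a set. -/
def UniformlyGloballyRecurrent (A : Set X) : Prop :=
  ∀ R : ℝ≥0, 0 < R → ∃ τ : ℝ≥0,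
    ∀ x : X, dA A x ≤ R → ∀ d ∈ S.Dist, ∃ t ≤ τ, S.φ t x d ∈ A

/-- The set `P₊(A) = ⋂_{ε>0} ℛ(B_ε(A))`. -/
def Pplus (A : Set X) : Set X := ⋂ (ε : ℝ≥0) (_ : 0 < ε), S.R (ballSet ε A)

/-- Non-coercive Lyapunov function w.r.t. a bounded set `A`. -/
def NonCoerciveLyapunov (A : Set X) (V : X → ℝ) : Prop :=
  Continuous V ∧ (∀ x : X, 0 ≤ V x) ∧ (∀ x ∈ A, V x = 0) ∧
  (∃ ψ₂ : ℝ≥0 → ℝ≥0, ClassKinf ψ₂ ∧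
    ∀ x ∉ A, 0 < V x ∧ V x ≤ (ψ₂ (dA A x) : ℝ)) ∧
  (∃ α : ℝ≥0 → ℝ≥0, ClassK α ∧ ∀ x ∉ A, ∀ d ∈ S.Dist,
    Filter.liminf (fun t : ℝ≥0 => (V (S.φ t x d) - V x) / (t : ℝ))
      (𝓝[>] (0 : ℝ≥0)) ≤ -(α (dA A x) : ℝ))

/-- The system is Lagrange stable if some bounded nonempty set is Lagrange stable. -/
def SystemLagrangeStable : Prop :=
  ∃ A : Set X, A.Nonempty ∧ IsBounded A ∧ S.LagrangeStable A

/-- The system is pUGAS if some bounded nonempty set is pUGAS. -/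
def SystemPUGAS : Prop :=
  ∃ A : Set X, A.Nonempty ∧ IsBounded A ∧ S.PUGASSet A

end System

/-- Auxiliary: a continuous antitone envelope of a bounded decaying function. -/
lemma env_exists (g : ℝ≥0 → ℝ≥0) (hg1 : ∀ s, g s ≤ 1)
    (hg0 : ∀ ε : ℝ≥0, 0 < ε → ∃ T : ℝ≥0, ∀ s, T ≤ s → g s ≤ ε) :
    ∃ G : ℝ≥0 → ℝ≥0, Continuous G ∧ Antitone G ∧ (∀ t, g t ≤ G t) ∧
      ∀ ε : ℝ≥0, 0 < ε → ∃ T : ℝ≥0, ∀ t, T ≤ t → G t ≤ ε := by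
  set G : ℝ≥0 → ℝ≥0 := fun t => sSup (Set.range fun s => g s - (t - s)) with hGdef
  have hbdd : ∀ t, BddAbove (Set.range fun s => g s - (t - s)) := by
    intro t
    refine ⟨1, ?_⟩
    rintro y ⟨s, rfl⟩
    exact le_trans tsub_le_self (hg1 s)
  have hne : ∀ t, (Set.range fun s => g s - (t - s)).Nonempty := fun t => ⟨_, ⟨0, rfl⟩⟩
  have hge : ∀ t, g t ≤ G t := by
    intro t
    have h := le_csSup (hbdd t) (Set.mem_range_self (f := fun s => g s - (t - s)) t)
    simpa using h
  have hanti : Antitone G := by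
    intro t t' h
    refine csSup_le (hne t') ?_
    rintro y ⟨s, rfl⟩
    exact le_trans (tsub_le_tsub_left (tsub_le_tsub_right h s) _)
      (le_csSup (hbdd t) (Set.mem_range_self s))
  have hlip : ∀ t t' : ℝ≥0, t ≤ t' → G t ≤ G t' + (t' - t) := by
    intro t t' h
    refine csSup_le (hne t) ?_
    rintro y ⟨s, rfl⟩
    have h1 : g s - (t - s) ≤ g s - (t' - s) + ((t' - s) - (t - s)) := tsub_le_tsub_add_tsub
    have h2 : (t' - s) - (t - s) ≤ t' - t := by
      rw [tsub_le_iff_right]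
      calc t' - s ≤ t' - t + (t - s) := tsub_le_tsub_add_tsub
        _ = t' - t + (t - s) := rfl
    exact le_trans h1 (add_le_add (le_csSup (hbdd t') (Set.mem_range_self s)) h2)
  have hcont : Continuous G := by
    have hl : LipschitzWith 1 G := by
      apply LipschitzWith.of_dist_le_mul
      have key : ∀ a b : ℝ≥0, a ≤ b → dist (G a) (G b) ≤ 1 * dist a b := by
        intro a b hab
        rw [NNReal.dist_eq, NNReal.dist_eq, one_mul]
        have h1 : (G b : ℝ) ≤ G a := hanti hab
        have h2 : (G a : ℝ) ≤ (G b : ℝ) + ((b : ℝ) - a) := by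
          have h3 := hlip a b hab
          have h4 : ((G a : ℝ≥0) : ℝ) ≤ ((G b + (b - a) : ℝ≥0) : ℝ) := by exact_mod_cast h3
          rwa [NNReal.coe_add, NNReal.coe_sub hab] at h4
        have hab' : (a : ℝ) ≤ b := by exact_mod_cast hab
        rw [abs_of_nonneg (by linarith), abs_of_nonpos (by linarith)]
        linarith
      intro a b
      rcases le_total a b with hab | hab
      · exact key a b hab
      · rw [dist_comm (G a) (G b), dist_comm a b]
        exact key b a hab
    exact hl.continuous
  refine ⟨G, hcont, hanti, hge, ?_⟩
  intro ε hε
  obtain ⟨T, hT⟩ := hg0 ε hε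
  refine ⟨T + 1, fun t ht => csSup_le (hne t) ?_⟩
  rintro y ⟨s, rfl⟩
  rcases le_total T s with hs | hs
  · exact le_trans tsub_le_self (hT s hs)
  · have h1 : (1 : ℝ≥0) ≤ t - s := by
      refine le_tsub_of_add_le_right ?_
      calc (1 : ℝ≥0) + s ≤ 1 + T := by gcongr
        _ = T + 1 := by ring
        _ ≤ t := ht
    have h2 : g s - (t - s) = 0 := tsub_eq_zero_of_le (le_trans (hg1 s) h1)
    show g s - (t - s) ≤ ε
    rw [h2]
    exact zero_le

/-- a bounded invariant UGATT uniformly globally stable set is UGAS. -/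
theorem stmt10 {X : Type*} [NormedAddCommGroup X] [NormedSpace ℝ X]
    {W : Type*} [NormedAddCommGroup W] [NormedSpace ℝ W] (S : System X W) (A : Set X) (hA : A.Nonempty) (hAb : IsBounded A)
    (hinv : S.Invariant A) (hatt : S.UGATT A) (hugs : S.UGS A) :
    S.UGAS A := by
  classical
  obtain ⟨σ, ⟨⟨hσc, hσm, hσ0⟩, hσinf⟩, hσb⟩ := hugs
  -- the gain function γ
  set γ : ℝ≥0 → ℝ≥0 := fun r => σ r + NNReal.sqrt (σ r) + r * σ r with hγdef
  have hγsm : StrictMono γ := by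
    intro a b hab
    have h1 : σ a < σ b := hσm hab
    have h2 : NNReal.sqrt (σ a) < NNReal.sqrt (σ b) := NNReal.sqrt_lt_sqrt.mpr h1
    have h3 : a * σ a ≤ b * σ b := mul_le_mul' hab.le h1.le
    exact add_lt_add_of_lt_of_le (add_lt_add h1 h2) h3
  have hγmono : Monotone γ := hγsm.monotone
  have hγ0 : γ 0 = 0 := by simp [hγdef, hσ0]
  have hγpos : ∀ r : ℝ≥0, 0 < r → 0 < γ r := fun r hr => hγ0 ▸ hγsm hr
  have hσleγ : ∀ r, σ r ≤ γ r := fun r =>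
    le_trans (self_le_add_right _ _) (self_le_add_right _ _)
  have hsqrtleγ : ∀ r, NNReal.sqrt (σ r) ≤ γ r := fun r =>
    le_trans (le_add_self) (self_le_add_right _ _)
  have hγcont : Continuous γ := by
    exact ((hσc.add (NNReal.continuous_sqrt.comp hσc)).add (continuous_id.mul hσc))
  -- key uniform decay estimate
  have key : ∀ ε : ℝ≥0, 0 < ε → ∃ τ : ℝ≥0, ∀ s : ℝ≥0, τ ≤ s → ∀ x : X, ∀ d ∈ S.Dist,
      dA A (S.φ s x d) ≤ ε * γ (dA A x) := by
    intro ε hε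
    have hev : ∀ᶠ r in 𝓝 (0 : ℝ≥0), σ r < ε ^ 2 := by
      have h := hσc.tendsto 0
      rw [hσ0] at h
      exact h (Iio_mem_nhds (by positivity))
    obtain ⟨δ, hδpos, hδ⟩ := NNReal.nhds_zero_basis.eventually_iff.mp hev
    have hεγδ : 0 < ε * γ δ := mul_pos hε (hγpos δ hδpos)
    obtain ⟨τ, hτ⟩ := hatt (ε * γ δ) hεγδ (ε⁻¹ + 1) (by positivity)
    refine ⟨τ, fun s hs x d hd => ?_⟩
    rcases lt_or_ge (dA A x) δ with h1 | h1
    · -- small states: use UGS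
      have hσx : σ (dA A x) < ε ^ 2 := hδ h1
      have hsq : NNReal.sqrt (σ (dA A x)) ≤ ε := by
        rw [NNReal.sqrt_le_iff_le_sq]
        exact hσx.le
      calc dA A (S.φ s x d) ≤ σ (dA A x) := hσb x d hd s
        _ = NNReal.sqrt (σ (dA A x)) * NNReal.sqrt (σ (dA A x)) :=
            (NNReal.mul_self_sqrt _).symm
        _ ≤ ε * NNReal.sqrt (σ (dA A x)) := mul_le_mul_left hsq _
        _ ≤ ε * γ (dA A x) := mul_le_mul_right (hsqrtleγ _) _
    rcases le_total (dA A x) (ε⁻¹ + 1) with h2 | h2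
    · -- medium states: use UGATT
      calc dA A (S.φ s x d) ≤ ε * γ δ := hτ x h2 d hd s hs
        _ ≤ ε * γ (dA A x) := mul_le_mul_right (hγmono h1) _
    · -- large states: use UGS and the factor r in γ
      have h3 : ε⁻¹ * σ (dA A x) ≤ γ (dA A x) := by
        calc ε⁻¹ * σ (dA A x) ≤ (ε⁻¹ + 1) * σ (dA A x) :=
              mul_le_mul_left (self_le_add_right _ _) _
          _ ≤ dA A x * σ (dA A x) := mul_le_mul_left h2 _
          _ ≤ γ (dA A x) := le_add_self
      calc dA A (S.φ s x d) ≤ σ (dA A x) := hσb x d hd s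
        _ = ε * (ε⁻¹ * σ (dA A x)) := by
            rw [← mul_assoc, mul_inv_cancel₀ hε.ne', one_mul]
        _ ≤ ε * γ (dA A x) := mul_le_mul_right h3 _
  -- the decaying gain g
  set Q : ℝ≥0 → Set ℝ≥0 := fun t =>
    (fun p : ℝ≥0 × X × (ℝ≥0 → W) => dA A (S.φ p.1 p.2.1 p.2.2) / γ (dA A p.2.1)) ''
      {p | p.2.2 ∈ S.Dist ∧ t ≤ p.1} with hQdef
  set g : ℝ≥0 → ℝ≥0 := fun t => sSup (Q t) with hgdef
  have hdiv_le : ∀ (a b c : ℝ≥0), a ≤ c * b → a / b ≤ c := by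
    intro a b c h
    rcases eq_or_ne b 0 with rfl | hb
    · rw [div_zero]; exact zero_le
    · exact (div_le_iff₀ (pos_iff_ne_zero.mpr hb)).mpr h
  have hmem_le1 : ∀ t, ∀ y ∈ Q t, y ≤ 1 := by
    intro t y hy
    obtain ⟨p, hp, rfl⟩ := hy
    refine hdiv_le _ _ _ ?_
    rw [one_mul]
    exact le_trans (hσb p.2.1 p.2.2 hp.1 p.1) (hσleγ _)
  have hbQ : ∀ t, BddAbove (Q t) := fun t => ⟨1, fun y hy => hmem_le1 t y hy⟩
  have hsSup_le : ∀ (s : Set ℝ≥0) (c : ℝ≥0), (∀ y ∈ s, y ≤ c) → sSup s ≤ c := by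
    intro s c h
    rcases s.eq_empty_or_nonempty with rfl | hne
    · rw [csSup_empty]; exact zero_le
    · exact csSup_le hne h
  have hg1 : ∀ t, g t ≤ 1 := fun t => hsSup_le _ _ (hmem_le1 t)
  have hgdec : ∀ ε : ℝ≥0, 0 < ε → ∃ T : ℝ≥0, ∀ s, T ≤ s → g s ≤ ε := by
    intro ε hε
    obtain ⟨τ, hτ⟩ := key ε hε
    refine ⟨τ, fun t ht => hsSup_le _ _ ?_⟩
    rintro y ⟨p, hp, rfl⟩
    exact hdiv_le _ _ _ (hτ p.1 (le_trans ht hp.2) p.2.1 p.2.2 hp.1)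
  obtain ⟨G, hGc, hGanti, hGge, hGdec⟩ := env_exists g hg1 hgdec
  -- the KL function
  have hinvc : Continuous fun t : ℝ≥0 => (1 + t)⁻¹ := by
    refine continuous_iff_continuousAt.mpr fun t => ?_
    exact ContinuousAt.inv₀ (by fun_prop) (by positivity)
  set β : ℝ≥0 → ℝ≥0 → ℝ≥0 := fun r t => γ r * (G t + (1 + t)⁻¹) with hβdef
  have hGpos : ∀ t : ℝ≥0, 0 < G t + (1 + t)⁻¹ := by
    intro t
    have : (0 : ℝ≥0) < (1 + t)⁻¹ := by positivity
    exact lt_of_lt_of_le this (le_add_self)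
  refine ⟨β, ⟨?_, ?_, ?_⟩, ?_⟩
  · -- continuity
    exact (hγcont.comp continuous_fst).mul
      ((hGc.comp continuous_snd).add (hinvc.comp continuous_snd))
  · -- class K in r
    intro t
    refine ⟨(hγcont.mul continuous_const), ?_, by simp [hβdef, hγ0]⟩
    intro a b hab
    exact mul_lt_mul_of_pos_right (hγsm hab) (hGpos t)
  · -- strictly decreasing to zero in t
    intro r hr
    constructor
    · intro t t' htt'
      refine mul_lt_mul_of_pos_left ?_ (hγpos r hr)
      refine add_lt_add_of_le_of_lt (hGanti htt'.le) ?_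
      exact (inv_lt_inv₀ (by positivity) (by positivity)).mpr (by gcongr)
    · -- tendsto 0
      have hG0 : Tendsto G atTop (𝓝 0) := by
        rw [NNReal.nhds_zero_basis.tendsto_right_iff]
        intro ε hε
        obtain ⟨T, hT⟩ := hGdec (ε / 2) (by positivity)
        refine eventually_atTop.mpr ⟨T, fun t ht => ?_⟩
        exact lt_of_le_of_lt (hT t ht) (NNReal.half_lt_self hε.ne')
      have hI0 : Tendsto (fun t : ℝ≥0 => (1 + t)⁻¹) atTop (𝓝 0) := by
        rw [NNReal.nhds_zero_basis.tendsto_right_iff]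
        intro ε hε
        refine eventually_atTop.mpr ⟨ε⁻¹, fun t ht => ?_⟩
        have h1 : ε⁻¹ < 1 + t := lt_of_le_of_lt ht (lt_one_add t)
        have h2 : (1 + t)⁻¹ < (ε⁻¹)⁻¹ := (inv_lt_inv₀ (by positivity) (by positivity)).mpr h1
        rwa [inv_inv] at h2
      have := (hG0.add hI0).const_mul (γ r)
      simpa using this
  · -- the bound
    intro x d hd t
    rcases eq_or_ne (dA A x) 0 with h0 | h0
    · have h1 : dA A (S.φ t x d) ≤ σ 0 := h0 ▸ hσb x d hd t
      rw [hσ0] at h1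
      simpa using le_trans h1 zero_le
    · have hγx : γ (dA A x) ≠ 0 := fun h => h0 (by
        by_contra h0'
        exact absurd h (ne_of_gt (hγpos _ (pos_iff_ne_zero.mpr h0'))))
      have hmem : dA A (S.φ t x d) / γ (dA A x) ∈ Q t :=
        ⟨(t, x, d), ⟨hd, le_rfl⟩, rfl⟩
      have h1 : dA A (S.φ t x d) / γ (dA A x) ≤ G t :=
        le_trans (le_csSup (hbQ t) hmem) (hGge t)
      calc dA A (S.φ t x d)
          = dA A (S.φ t x d) / γ (dA A x) * γ (dA A x) := (div_mul_cancel₀ _ hγx).symm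
        _ ≤ G t * γ (dA A x) := mul_le_mul_left h1 _
        _ ≤ (G t + (1 + t)⁻¹) * γ (dA A x) := mul_le_mul_left (self_le_add_right _ _) _
        _ = β (dA A x) t := mul_comm _ _
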